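/- arXiv:1612.03106 — 4 statements merged into one kernel-verified Lean document; each statement's English description precedes it below -/
import Mathlib

section
/- Let a Polish group G act continuously on a Polish space Y. Then there are at most countably many non-meager orbits, and every orbit that is both dense and non-meager is comeager. -/
open Filter Topology Set

section Aux

variable {Y : Type*} [TopologicalSpace Y]

lemma isMeagre_iUnion' {ι : Sort*} [Countable ι] {s : ι → Set Y}
    (hs : ∀ i, IsMeagre (s i)) : IsMeagre (⋃ i, s i) := by
  rw [IsMeagre, compl_iUnion]; exact (countable_iInter_mem).2 hs

lemma IsMeagre.union' {s t : Set Y} (hs : IsMeagre s) (ht : IsMeagre t) :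
    IsMeagre (s ∪ t) := by
  rw [IsMeagre, compl_union]; exact inter_mem hs ht

lemma meagre_diff_of_residualEq {s u : Set Y} (h : s =ᵇ u) : IsMeagre (s \ u) := by
  have := h.mem_iff
  rw [IsMeagre]
  filter_upwards [this] with x hx
  simp only [mem_compl_iff, mem_diff, not_and, not_not]
  exact fun hs => hx.1 hs

lemma IsOpen.eq_empty_of_isMeagre [BaireSpace Y] {s : Set Y} (ho : IsOpen s)
    (hm : IsMeagre s) : s = ∅ := by
  have hd : Dense sᶜ := dense_of_mem_residual hm
  rcases eq_empty_or_nonempty s with h | ⟨x, hx⟩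
  · exact h
  · exact absurd (hd.inter_open_nonempty s ho ⟨x, hx⟩) (by simp)

/-- Baire hull. -/
lemma exists_baire_hull [SecondCountableTopology Y] [BaireSpace Y] (S : Set Y) :
    ∃ H : Set Y, S ⊆ H ∧ BaireMeasurableSet H ∧
      ∀ Z : Set Y, BaireMeasurableSet Z → S ⊆ Z → IsMeagre (H \ Z) := by
  obtain ⟨B, hBc, -, hB⟩ := TopologicalSpace.exists_countable_basis Y
  set 𝒰 : Set (Set Y) := {U ∈ B | IsMeagre (U ∩ S)} with h𝒰
  set W : Set Y := ⋃₀ 𝒰 with hW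
  have hWo : IsOpen W := isOpen_sUnion fun U hU => hB.isOpen hU.1
  have hSW : IsMeagre (S ∩ W) := by
    have hco : Countable 𝒰 := (hBc.mono (sep_subset _ _)).to_subtype
    have : S ∩ W = ⋃ U : 𝒰, (U.1 ∩ S) := by
      ext x; simp only [mem_inter_iff, hW, mem_sUnion, iUnion_coe_set, mem_iUnion]
      constructor
      · rintro ⟨hxS, U, hU, hxU⟩; exact ⟨U, hU, hxU, hxS⟩
      · rintro ⟨U, hU, hxU, hxS⟩; exact ⟨hxS, U, hU, hxU⟩
    rw [this]
    exact isMeagre_iUnion' fun U => U.2.2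
  refine ⟨Wᶜ ∪ (S ∩ W), fun x hx => ?_, ?_, ?_⟩
  · by_cases h : x ∈ W
    · exact Or.inr ⟨hx, h⟩
    · exact Or.inl h
  · exact (hWo.baireMeasurableSet.compl).union hSW.baireMeasurableSet
  · intro Z hZ hSZ
    have key : IsMeagre (Wᶜ \ Z) := by
      by_contra hnm
      obtain ⟨V, hVo, hVeq⟩ := (hWo.baireMeasurableSet.compl.diff hZ).residualEq_isOpen
      have h1 : IsMeagre ((Wᶜ \ Z) \ V) := meagre_diff_of_residualEq hVeq
      have h2 : IsMeagre (V \ (Wᶜ \ Z)) := meagre_diff_of_residualEq hVeq.symm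
      have hVne : V.Nonempty := by
        rcases eq_empty_or_nonempty V with h | h
        · exact absurd (h1.mono (by rw [h]; simp)) hnm
        · exact h
      obtain ⟨x, hxV⟩ := hVne
      obtain ⟨U, hUB, hxU, hUV⟩ := hB.exists_subset_of_mem_open hxV hVo
      have hUS : IsMeagre (U ∩ S) := by
        refine (h2.mono ?_ : IsMeagre (U ∩ S))
        intro z hz
        exact ⟨hUV hz.1, fun hc => hc.2 (hSZ hz.2)⟩
      have hUW : U ⊆ W := subset_sUnion_of_mem ⟨hUB, hUS⟩
      have : IsMeagre U := h2.mono fun z hz => (⟨hUV hz, fun hc => hc.1 (hUW hz)⟩ : z ∈ V \ (Wᶜ \ Z))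
      exact absurd ((hB.isOpen hUB).eq_empty_of_isMeagre this) (by rintro rfl; exact hxU)
    have hsub : (Wᶜ ∪ (S ∩ W)) \ Z ⊆ (Wᶜ \ Z) ∪ (S ∩ W) := by
      rintro x ⟨hx | hx, hxZ⟩
      · exact Or.inl ⟨hx, hxZ⟩
      · exact Or.inr hx
    exact (key.union' hSW).mono hsub

end Aux


/-- cylinder in Baire space -/
def cylList (l : List ℕ) : Set (ℕ → ℕ) := {x | ∀ i < l.length, x i = l.getD i 0}

lemma cylList_nil : cylList [] = univ := by
  ext x; simp [cylList]

lemma cylList_succ (l : List ℕ) : cylList l = ⋃ n, cylList (l ++ [n]) := by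
  ext x
  simp only [mem_iUnion]
  constructor
  · intro hx
    refine ⟨x l.length, fun i hi => ?_⟩
    rw [List.length_append, List.length_singleton] at hi
    rcases Nat.lt_or_ge i l.length with h | h
    · rw [List.getD_append _ _ _ _ h]
      exact hx i h
    · have : i = l.length := by omega
      subst this
      simp [List.getD, List.getElem?_append_right h]
  · rintro ⟨n, hx⟩ i hi
    have := hx i (by simp; omega)
    rwa [List.getD_append _ _ _ _ hi] at this

section Aux2

/-- Analytic sets have the Baire property. -/
theorem analyticSet_baireMeasurableSet {Y : Type*} [TopologicalSpace Y] [PolishSpace Y]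
    {s : Set Y} (hs : MeasureTheory.AnalyticSet s) : BaireMeasurableSet s := by
  letI := TopologicalSpace.upgradeIsCompletelyMetrizable Y
  rw [MeasureTheory.AnalyticSet] at hs
  rcases hs with rfl | ⟨f, hf, rfl⟩
  · exact isOpen_empty.baireMeasurableSet
  -- the scheme
  set A : List ℕ → Set Y := fun l => f '' cylList l with hA
  choose H hH1 hH2 hH3 using fun l => exists_baire_hull (Y := Y) (A l)
  set K : List ℕ → Set Y := fun l => H l ∩ closure (A l) with hK
  have hKb : ∀ l, BaireMeasurableSet (K l) := fun l =>
    (hH2 l).inter (isClosed_closure (s := A l)).isOpen_compl.baireMeasurableSet.of_compl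
  have hAK : ∀ l, A l ⊆ K l := fun l => subset_inter (hH1 l) subset_closure
  set M : Set Y := ⋃ l : List ℕ, (K l \ ⋃ n : ℕ, K (l ++ [n])) with hM
  have hMm : IsMeagre M := by
    refine isMeagre_iUnion' fun l => ?_
    have hsub : A l ⊆ ⋃ n : ℕ, K (l ++ [n]) := by
      intro y hy
      obtain ⟨x, hx, rfl⟩ := hy
      rw [cylList_succ] at hx
      rw [mem_iUnion] at hx
      rw [mem_iUnion]
      obtain ⟨n, hn⟩ := hx
      exact ⟨n, hAK _ ⟨x, hn, rfl⟩⟩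
    have : IsMeagre (H l \ ⋃ n : ℕ, K (l ++ [n])) :=
      hH3 l _ (BaireMeasurableSet.iUnion fun n => hKb _) hsub
    exact this.mono fun y hy => (⟨hy.1.1, hy.2⟩ : y ∈ H l \ ⋃ n : ℕ, K (l ++ [n]))
  -- K [] \ M ⊆ range f
  have key : K [] \ M ⊆ range f := by
    rintro y ⟨hy0, hyM⟩
    -- recursively build a branch
    have step : ∀ l : List ℕ, y ∈ K l → ∃ n : ℕ, y ∈ K (l ++ [n]) := by
      intro l hl
      by_contra hc
      push_neg at hc
      exact hyM (mem_iUnion.2 ⟨l, hl, fun h => by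
        rw [mem_iUnion] at h; obtain ⟨n, hn⟩ := h; exact hc n hn⟩)
    let g : ∀ k : ℕ, {l : List ℕ // l.length = k ∧ y ∈ K l} := fun k =>
      Nat.rec ⟨[], rfl, hy0⟩
        (fun _ p => ⟨p.1 ++ [(step p.1 p.2.2).choose],
          by simp [p.2.1], (step p.1 p.2.2).choose_spec⟩) k
    set x : ℕ → ℕ := fun i => ((g (i + 1)).1).getD i 0 with hx
    have hgsucc : ∀ k, (g (k + 1)).1 = (g k).1 ++ [(step (g k).1 (g k).2.2).choose] :=
      fun k => rfl
    have hcoh : ∀ k, ∀ i < k, ((g k).1).getD i 0 = x i := by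
      intro k
      induction k with
      | zero => omega
      | succ k ih =>
        intro i hi
        rcases Nat.lt_or_ge i k with h | h
        · rw [hgsucc k, List.getD_append _ _ _ _ (by rw [(g k).2.1]; exact h)]
          exact ih i h
        · have : i = k := by omega
          subst this
          rfl
    -- choose approximating points
    have hcl : ∀ k : ℕ, y ∈ closure (A (g k).1) := fun k => (g k).2.2.2
    have hz : ∀ k : ℕ, ∃ z ∈ cylList (g k).1, dist y (f z) < 1 / (k + 1) := by
      intro k
      have := (Metric.mem_closure_iff.1 (hcl k)) (1 / (k + 1)) (by positivity)
      obtain ⟨b, ⟨z, hz, rfl⟩, hb⟩ := this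
      exact ⟨z, hz, hb⟩
    choose z hz1 hz2 using hz
    have hzx : Tendsto z atTop (𝓝 x) := by
      rw [tendsto_pi_nhds]
      intro i
      refine tendsto_const_nhds.congr' ?_
      filter_upwards [eventually_ge_atTop (i + 1)] with k hk
      have := hz1 k i (by rw [(g k).2.1]; omega)
      rw [this, hcoh k i (by omega)]
    have h1 : Tendsto (fun k => f (z k)) atTop (𝓝 (f x)) :=
      ((hf.tendsto x).comp hzx)
    have h2 : Tendsto (fun k => f (z k)) atTop (𝓝 y) := by
      rw [tendsto_iff_dist_tendsto_zero]
      refine squeeze_zero (fun k => dist_nonneg) (fun k => (dist_comm (f (z k)) y ▸ (hz2 k).le))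
        tendsto_one_div_add_atTop_nhds_zero_nat
    rw [← tendsto_nhds_unique h1 h2]
    exact mem_range_self x
  -- conclude
  have : range f = (K [] \ M) ∪ (range f ∩ M) := by
    apply Subset.antisymm
    · intro y hy
      by_cases h : y ∈ M
      · exact Or.inr ⟨hy, h⟩
      · refine Or.inl ⟨?_, h⟩
        obtain ⟨x, rfl⟩ := hy
        exact hAK [] ⟨x, by rw [cylList_nil]; trivial, rfl⟩
    · rintro y (⟨hy, hyM⟩ | ⟨hy, -⟩)
      · exact key ⟨hy, hyM⟩
      · exact hy
  rw [this]
  exact ((hKb []).inter (BaireMeasurableSet.of_mem_residual hMm)).union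
    (hMm.mono inter_subset_right).baireMeasurableSet

/-- A homeomorphism maps meager sets to meager sets. -/
lemma IsMeagre.image_homeomorph {Y : Type*} [TopologicalSpace Y] {s : Set Y} (e : Y ≃ₜ Y)
    (hs : IsMeagre s) : IsMeagre (e '' s) := by
  rw [show e '' s = e.symm ⁻¹' s from e.toEquiv.image_eq_preimage_symm s, IsMeagre, ← preimage_compl]
  exact mem_map.mp (tendsto_residual_of_isOpenMap e.symm.continuous e.symm.isOpenMap hs)

open Pointwise in
/-- For a continuous action of a Polish group `G` on a Polish space `Y`:
there are at most countably many non-meager orbits, and every dense non-meager orbit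
is comeager. -/
theorem stmt0 {G Y : Type} [Group G] [TopologicalSpace G] [IsTopologicalGroup G]
    [PolishSpace G] [TopologicalSpace Y] [PolishSpace Y]
    [MulAction G Y] [ContinuousSMul G Y] :
    Set.Countable {O : Set Y | (∃ y : Y, O = MulAction.orbit G y) ∧ ¬ IsMeagre O} ∧
    ∀ y : Y, Dense (MulAction.orbit G y) → ¬ IsMeagre (MulAction.orbit G y) →
      MulAction.orbit G y ∈ residual Y := by
  haveI : BaireSpace Y := by letI := TopologicalSpace.upgradeIsCompletelyMetrizable Y; infer_instance
  have horb_bp : ∀ y : Y, BaireMeasurableSet (MulAction.orbit G y) := by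
    intro y
    apply analyticSet_baireMeasurableSet
    exact MeasureTheory.analyticSet_range_of_polishSpace
      (Continuous.smul continuous_id continuous_const)
  have hloc : ∀ y : Y, ¬ IsMeagre (MulAction.orbit G y) →
      ∃ U : Set Y, IsOpen U ∧ U.Nonempty ∧ IsMeagre (U \ MulAction.orbit G y) ∧
        IsMeagre (MulAction.orbit G y \ U) := by
    intro y hnm
    obtain ⟨U, hUo, hUeq⟩ := (horb_bp y).residualEq_isOpen
    have h1 := meagre_diff_of_residualEq hUeq
    have h2 := meagre_diff_of_residualEq hUeq.symm
    refine ⟨U, hUo, ?_, h2, h1⟩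
    rcases eq_empty_or_nonempty U with rfl | h
    · exact absurd (h1.mono (by simp)) hnm
    · exact h
  have hdisj : ∀ y y' : Y, MulAction.orbit G y ≠ MulAction.orbit G y' →
      MulAction.orbit G y ∩ MulAction.orbit G y' = ∅ := by
    intro y y' hne
    rcases eq_empty_or_nonempty (MulAction.orbit G y ∩ MulAction.orbit G y') with h | ⟨z, hz1, hz2⟩
    · exact h
    · exact absurd ((MulAction.orbit_eq_iff.2 hz1).symm.trans
        (MulAction.orbit_eq_iff.2 hz2)) hne
  constructor
  · -- countability
    obtain ⟨B, hBc, -, hB⟩ := TopologicalSpace.exists_countable_basis Y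
    have hchoice : ∀ O ∈ {O : Set Y | (∃ y : Y, O = MulAction.orbit G y) ∧ ¬ IsMeagre O},
        ∃ U ∈ B, U.Nonempty ∧ IsMeagre (U \ O) := by
      rintro O ⟨⟨y, rfl⟩, hnm⟩
      obtain ⟨U, hUo, ⟨x, hx⟩, hUm, -⟩ := hloc y hnm
      obtain ⟨U', hU'B, hxU', hU'U⟩ := hB.exists_subset_of_mem_open hx hUo
      exact ⟨U', hU'B, ⟨x, hxU'⟩, hUm.mono (diff_subset_diff_left hU'U)⟩
    choose! φ hφB hφne hφm using hchoice
    rw [← Set.countable_coe_iff]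
    have : Countable B := hBc.to_subtype
    refine Function.Injective.countable
      (f := fun O : {O : Set Y | (∃ y : Y, O = MulAction.orbit G y) ∧ ¬ IsMeagre O} =>
        (⟨φ O.1, hφB O.1 O.2⟩ : B)) ?_
    rintro ⟨O, hO⟩ ⟨O', hO'⟩ h
    simp only [Subtype.mk.injEq] at h ⊢
    by_contra hne
    obtain ⟨y, hy⟩ := hO.1
    obtain ⟨y', hy'⟩ := hO'.1
    have hOO' : O ∩ O' = ∅ := by
      rw [hy, hy']; exact hdisj y y' (by rw [← hy, ← hy']; exact hne)
    rw [eq_empty_iff_forall_notMem] at hOO'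
    have hsub : φ O ⊆ (φ O \ O) ∪ (φ O \ O') := by
      intro x hx
      by_cases h1 : x ∈ O
      · exact Or.inr ⟨hx, fun h2 => hOO' x ⟨h1, h2⟩⟩
      · exact Or.inl ⟨hx, h1⟩
    have hUm : IsMeagre (φ O) := ((hφm O hO).union' (h ▸ hφm O' hO')).mono hsub
    exact absurd ((hB.isOpen (hφB O hO)).eq_empty_of_isMeagre hUm)
      (Nonempty.ne_empty (hφne O hO))
  · -- dense non-meager orbit is comeager
    intro y hd hnm
    obtain ⟨U, hUo, hUne, hUm, hOUm⟩ := hloc y hnm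
    set O := MulAction.orbit G y with hO
    have hinv : ∀ (d : G) (u : Y), u ∈ O → d • u ∈ O := by
      rintro d u ⟨k, rfl⟩
      exact ⟨d * k, mul_smul d k y⟩
    have hOU : (O ∩ U).Nonempty := by
      rcases eq_empty_or_nonempty (O ∩ U) with h | h
      · rw [eq_empty_iff_forall_notMem] at h
        exact absurd (hOUm.mono fun x hx => (⟨hx, fun hc => h x ⟨hx, hc⟩⟩ : x ∈ O \ U)) hnm
      · exact h
    obtain ⟨w, hwO, hwU⟩ := hOU
    obtain ⟨h₀, rfl⟩ := hwO
    obtain ⟨D, hDc, hDd⟩ := TopologicalSpace.exists_countable_dense G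
    have : Countable D := hDc.to_subtype
    set V : Set Y := ⋃ d : D, (d : G) • U with hV
    have hVo : IsOpen V := isOpen_iUnion fun d => hUo.smul (d : G)
    have hOV : O ⊆ V := by
      rintro p ⟨g, rfl⟩
      have hWo : IsOpen {h : G | h⁻¹ • (g • y) ∈ U} :=
        hUo.preimage ((continuous_inv.smul continuous_const))
      have hWne : (g * h₀⁻¹) ∈ {h : G | h⁻¹ • (g • y) ∈ U} := by
        show ((g * h₀⁻¹)⁻¹) • (g • y) ∈ U
        rw [smul_smul, show (g * h₀⁻¹)⁻¹ * g = h₀ by group]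
        exact hwU
      obtain ⟨d, hdD, hdW⟩ := hDd.exists_mem_open hWo ⟨_, hWne⟩
      refine mem_iUnion.2 ⟨⟨d, hdD⟩, d⁻¹ • (g • y), hdW, by simp⟩
    have hVOm : IsMeagre (V \ O) := by
      have hsub : V \ O ⊆ ⋃ d : D, ((d : G) • (U \ O)) := by
        rintro x ⟨hxV, hxO⟩
        obtain ⟨d, hxd⟩ := mem_iUnion.1 hxV
        obtain ⟨u, huU, rfl⟩ := hxd
        exact mem_iUnion.2 ⟨d, smul_mem_smul_set ⟨huU, fun hc => hxO (hinv _ _ hc)⟩⟩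
      refine (isMeagre_iUnion' fun d : D => ?_).mono hsub
      rw [← Set.image_smul]
      exact hUm.image_homeomorph (Homeomorph.smul (d : G))
    have hVd : Dense V := hd.mono hOV
    have hVc : IsMeagre Vᶜ := by
      rw [IsMeagre, compl_compl]
      exact residual_of_dense_open hVo hVd
    have : IsMeagre Oᶜ := by
      refine (hVOm.union' hVc).mono fun x hx => ?_
      by_cases h : x ∈ V
      · exact Or.inl ⟨h, hx⟩
      · exact Or.inr h
    rwa [IsMeagre, compl_compl] at this

end Aux2
end

section
/- Let Y be a Polish G-space for a Polish group G, and let U ⊆ G be open. Then the map from Y to F(Y) sending y to the closure of U·y = {g·y : g ∈ U} is Borel. -/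
/-- The Effros Borel structure on the space of closed subsets of `Y`, generated by the
sets `{F : F ∩ U ≠ ∅}` for `U` open. -/
def effrosSpace (Y : Type) [TopologicalSpace Y] : MeasurableSpace {F : Set Y // IsClosed F} :=
  MeasurableSpace.generateFrom
    {A | ∃ U : Set Y, IsOpen U ∧ A = {F : {F : Set Y // IsClosed F} | ((F : Set Y) ∩ U).Nonempty}}

/-- For a Polish `G`-space `Y` and open `U ⊆ G`, the map `y ↦ closure (U ⬝ y)` is Borel
from `Y` to the Effros Borel space of closed subsets of `Y`. -/
theorem stmt2 {G Y : Type} [Group G] [TopologicalSpace G] [IsTopologicalGroup G] [PolishSpace G]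
    [TopologicalSpace Y] [PolishSpace Y] [MulAction G Y] [ContinuousSMul G Y]
    [MeasurableSpace Y] [BorelSpace Y]
    (U : Set G) (hU : IsOpen U) :
    @Measurable Y {F : Set Y // IsClosed F} _ (effrosSpace Y)
      (fun y => ⟨closure ((fun g : G => g • y) '' U), isClosed_closure⟩) := by
  unfold effrosSpace
  apply measurable_generateFrom
  rintro A ⟨V, hV, rfl⟩
  have h : (fun y : Y => (⟨closure ((fun g : G => g • y) '' U), isClosed_closure⟩ :
      {F : Set Y // IsClosed F})) ⁻¹' {F | ((F : Set Y) ∩ V).Nonempty}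
      = ⋃ g ∈ U, (fun y : Y => g • y) ⁻¹' V := by
    ext y
    simp only [Set.mem_preimage, Set.mem_setOf_eq, Set.mem_iUnion]
    constructor
    · rintro ⟨x, hxc, hxV⟩
      rcases mem_closure_iff.1 hxc V hV hxV with ⟨z, hzV, g, hgU, rfl⟩
      exact ⟨g, hgU, hzV⟩
    · rintro ⟨g, hgU, hgV⟩
      exact ⟨g • y, subset_closure ⟨g, hgU, rfl⟩, hgV⟩
  rw [h]
  exact (isOpen_biUnion fun g _ => hV.preimage (continuous_const_smul g)).measurableSet
end

section
/- Let G be a Polish group, n ≥ 2, and let (u_k) be a sequence of reduced words in the free group F_n on generators s_1,…,s_n. For every n-tuple f̄ = (f_1,…,f_n) in G such that the subgroup ⟨f̄⟩ generated by f̄ is non-discrete in G, there exists a sequence of reduced words w_k = v_k u_k (each w_k reduced and ending in u_k) such that w_k(f̄) → e in G. -/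
open Filter Topology

namespace Stmt11Aux


variable {α : Type*} [DecidableEq α]

/-- The no-cancellation relation between adjacent letters. -/
def R (a b : α × Bool) : Prop := ¬(a.1 = b.1 ∧ a.2 = !b.2)

theorem reduce_eq_self_of_chain : ∀ {L : List (α × Bool)},
    List.Chain' R L → FreeGroup.reduce L = L
  | [], _ => rfl
  | a :: L, h => by
    obtain ⟨h1, h2⟩ := List.isChain_cons.mp h
    have ih := reduce_eq_self_of_chain h2
    rw [FreeGroup.reduce.cons, ih]
    cases L with
    | nil => rfl
    | cons b tl =>
      have hR : R a b := h1 b rfl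
      exact if_neg hR

theorem chain_of_reduce_eq_self : ∀ {L : List (α × Bool)},
    FreeGroup.reduce L = L → List.Chain' R L
  | [], _ => List.isChain_nil
  | a :: L, h => by
    rw [FreeGroup.reduce.cons] at h
    rcases hK : FreeGroup.reduce L with _ | ⟨b, tl⟩
    · rw [hK] at h
      have hL : [] = L := by injection h
      rw [← hL]
      exact List.isChain_singleton a
    · rw [hK] at h
      dsimp only at h
      by_cases hc : a.1 = b.1 ∧ a.2 = !b.2
      · rw [if_pos hc] at h
        exfalso
        have hlen : (b :: tl).length ≤ L.length := by
          rw [← hK]; exact FreeGroup.Red.length_le FreeGroup.reduce.red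
        have := congrArg List.length h
        simp at this hlen
        omega
      · rw [if_neg hc] at h
        have hL : L = b :: tl := by
          have : b :: tl = L := by injection h
          exact this.symm
        have hred : FreeGroup.reduce L = L := by rw [hK, hL]
        have ih := chain_of_reduce_eq_self hred
        refine List.isChain_cons.mpr ⟨?_, ih⟩
        intro y hy
        rw [hL] at hy
        simp only [List.head?_cons, Option.mem_def, Option.some.injEq] at hy
        subst hy
        exact hc

theorem chain_toWord (x : FreeGroup α) : List.Chain' R x.toWord :=
  chain_of_reduce_eq_self (FreeGroup.reduce_toWord x)

theorem toWord_mul_of_chain {x y : FreeGroup α}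
    (h : List.Chain' R (x.toWord ++ y.toWord)) :
    (x * y).toWord = x.toWord ++ y.toWord := by
  have hxy : x * y = FreeGroup.mk (x.toWord ++ y.toWord) := by
    rw [← FreeGroup.mul_mk, FreeGroup.mk_toWord, FreeGroup.mk_toWord]
  rw [hxy, FreeGroup.toWord_mk, reduce_eq_self_of_chain h]

theorem invRev_singleton (d : α × Bool) :
    FreeGroup.invRev [d] = [(d.1, !d.2)] := by
  simp [FreeGroup.invRev]

/-- Conjugation lemma: any nontrivial element has a conjugate (by `1` or a single
letter with index `i`) whose reduced word begins and ends with letters of index `i`. -/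
theorem exists_conj (i : α) {w : FreeGroup α} (hw : w ≠ 1) :
    ∃ c w' : FreeGroup α, w' = c * w * c⁻¹ ∧ w' ≠ 1 ∧
      (∀ p ∈ w'.toWord.head?, p.1 = i) ∧ (∀ p ∈ w'.toWord.getLast?, p.1 = i) ∧
      (c = 1 ∨ c = FreeGroup.mk [(i, true)] ∨ c = FreeGroup.mk [(i, false)]) := by
  have hWne : w.toWord ≠ [] := fun h => hw (FreeGroup.toWord_eq_nil_iff.mp h)
  set a := w.toWord.head hWne with ha
  set b := w.toWord.getLast hWne with hb
  have hhead : w.toWord.head? = some a := List.head?_eq_head hWne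
  have hlast : w.toWord.getLast? = some b := List.getLast?_eq_getLast hWne
  by_cases hab : a.1 = i ∧ b.1 = i
  · refine ⟨1, w, by simp, hw, ?_, ?_, Or.inl rfl⟩
    · intro p hp; rw [hhead] at hp
      simp only [Option.mem_def, Option.some.injEq] at hp; subst hp; exact hab.1
    · intro p hp; rw [hlast] at hp
      simp only [Option.mem_def, Option.some.injEq] at hp; subst hp; exact hab.2
  · set s : Bool := if a.1 = i then a.2 else !b.2 with hs
    set c : FreeGroup α := FreeGroup.mk [(i, s)] with hc
    have hmk : c * w * c⁻¹ = FreeGroup.mk ((i, s) :: (w.toWord ++ [(i, !s)])) := by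
      rw [hc, FreeGroup.inv_mk, invRev_singleton,
        ← FreeGroup.mk_toWord (x := w)]
      rw [FreeGroup.mul_mk, FreeGroup.mul_mk, FreeGroup.mk_toWord]
      simp
    have hchain : List.Chain' R ((i, s) :: (w.toWord ++ [(i, !s)])) := by
      refine List.isChain_cons.mpr ⟨?_, ?_⟩
      · intro y hy
        rw [List.head?_append_of_ne_nil w.toWord hWne, hhead] at hy
        simp only [Option.mem_def, Option.some.injEq] at hy; subst hy
        rintro ⟨h1, h2⟩
        rw [hs, if_pos h1.symm] at h2
        exact (Bool.not_ne_self a.2 h2.symm).elim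
      · refine List.isChain_append.mpr ⟨chain_toWord w, List.isChain_singleton _, ?_⟩
        intro x hx y hy
        rw [hlast] at hx
        simp only [List.head?_cons, Option.mem_def, Option.some.injEq] at hx hy
        subst hx; subst hy
        rintro ⟨h1, h2⟩
        have hai : ¬ a.1 = i := fun h => hab ⟨h, h1⟩
        rw [hs, if_neg hai] at h2
        simp at h2
    have htoWord : (c * w * c⁻¹).toWord = (i, s) :: (w.toWord ++ [(i, !s)]) := by
      rw [hmk, FreeGroup.toWord_mk, reduce_eq_self_of_chain hchain]
    refine ⟨c, c * w * c⁻¹, rfl, ?_, ?_, ?_, ?_⟩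
    · intro h
      rw [h] at htoWord
      simp at htoWord
    · intro p hp
      rw [htoWord] at hp
      simp only [List.head?_cons, Option.mem_def, Option.some.injEq] at hp
      subst hp; rfl
    · intro p hp
      have : ((i, s) :: (w.toWord ++ [(i, !s)])) = ((i, s) :: w.toWord) ++ [(i, !s)] := by simp
      rw [htoWord, this, List.getLast?_append_of_ne_nil _ (by simp)] at hp
      simp only [Option.mem_def] at hp
      have h' : ([(i, !s)] : List (α × Bool)).getLast? = some (i, !s) := rfl
      rw [h'] at hp
      have : p = (i, !s) := by injection hp.symm
      subst this; rfl
    · cases hsv : s with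
      | true => exact Or.inr (Or.inl (by rw [hc, hsv]))
      | false => exact Or.inr (Or.inr (by rw [hc, hsv]))




theorem exists_small {G : Type} [Group G] [TopologicalSpace G] [IsTopologicalGroup G]
    {n : ℕ} {f : Fin n → G}
    (hf : ¬ DiscreteTopology (Subgroup.closure (Set.range f)))
    {U : Set G} (hU : U ∈ 𝓝 1) :
    ∃ w : FreeGroup (Fin n), w ≠ 1 ∧ FreeGroup.lift f w ∈ U := by
  by_contra hcon
  push_neg at hcon
  apply hf
  obtain ⟨V, hVU, hVopen, hV1⟩ := mem_nhds_iff.mp hU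
  rw [discreteTopology_iff_isOpen_singleton_one]
  have hset : ({1} : Set (Subgroup.closure (Set.range f))) =
      (Subtype.val : _ → G) ⁻¹' V := by
    ext ⟨g, hg⟩
    simp only [Set.mem_singleton_iff, Set.mem_preimage]
    constructor
    · intro h
      have : g = 1 := congrArg Subtype.val h
      rw [this]; exact hV1
    · intro hgV
      rw [← FreeGroup.range_lift_eq_closure] at hg
      obtain ⟨w, rfl⟩ := hg
      by_cases hw : w = 1
      · subst hw; ext; simp
      · exact absurd (hVU hgV) (hcon w hw)
  rw [hset]
  exact hVopen.preimage continuous_subtype_val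

theorem key {G : Type} [Group G] [TopologicalSpace G] [IsTopologicalGroup G]
    {n : ℕ} (hn : 2 ≤ n) {f : Fin n → G}
    (hf : ¬ DiscreteTopology (Subgroup.closure (Set.range f)))
    (t : FreeGroup (Fin n)) {U : Set G} (hU : U ∈ 𝓝 1) :
    ∃ v, (v * t).toWord = v.toWord ++ t.toWord ∧ FreeGroup.lift f (v * t) ∈ U := by
  by_cases ht : t = 1
  · exact ⟨1, by simp [ht], by simpa [ht] using mem_of_mem_nhds hU⟩
  · have hTne : t.toWord ≠ [] := fun h => ht (FreeGroup.toWord_eq_nil_iff.mp h)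
    set a := t.toWord.head hTne with ha
    have hhead : t.toWord.head? = some a := List.head?_eq_head hTne
    haveI : Nontrivial (Fin n) := Fin.nontrivial_iff_two_le.mpr hn
    obtain ⟨i, hi⟩ := exists_ne a.1
    -- the conjugation maps
    set φ : FreeGroup (Fin n) → G → G := fun c g =>
      (FreeGroup.lift f t)⁻¹ * ((FreeGroup.lift f c) * g * (FreeGroup.lift f c)⁻¹) *
        (FreeGroup.lift f t) with hφ
    have hφmem : ∀ c, φ c ⁻¹' U ∈ 𝓝 (1 : G) := by
      intro c
      have hcont : Continuous (φ c) := by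
        simp only [hφ]; fun_prop
      have h1 : φ c 1 = 1 := by simp [hφ]
      have := hcont.continuousAt (x := (1 : G))
      rw [ContinuousAt, h1] at this
      exact this hU
    have hV : (φ 1 ⁻¹' U) ∩ ((φ (FreeGroup.mk [(i, true)]) ⁻¹' U) ∩
        (φ (FreeGroup.mk [(i, false)]) ⁻¹' U)) ∈ 𝓝 (1 : G) :=
      Filter.inter_mem (hφmem 1) (Filter.inter_mem (hφmem _) (hφmem _))
    obtain ⟨w, hwne, hwV⟩ := exists_small hf hV
    obtain ⟨c, w', hw'eq, hw'ne, hw'head, hw'last, hcmem⟩ := exists_conj i hwne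
    have hw'Tne : w'.toWord ≠ [] := fun h => hw'ne (FreeGroup.toWord_eq_nil_iff.mp h)
    refine ⟨t⁻¹ * w', ?_, ?_⟩
    · -- word condition
      have hinv : t⁻¹.toWord = FreeGroup.invRev t.toWord := FreeGroup.toWord_inv t
      have hlastinv : (FreeGroup.invRev t.toWord).getLast? = some (a.1, !a.2) := by
        rw [FreeGroup.invRev, List.getLast?_reverse, List.head?_map, hhead]
        rfl
      have hchain1 : List.Chain' R (FreeGroup.invRev t.toWord ++ w'.toWord) := by
        refine List.isChain_append.mpr ⟨?_, chain_toWord w', ?_⟩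
        · have := chain_toWord t⁻¹
          rwa [hinv] at this
        · intro x hx y hy
          rw [hlastinv] at hx
          simp only [Option.mem_def, Option.some.injEq] at hx
          subst hx
          rintro ⟨h1, -⟩
          exact hi ((hw'head y hy) ▸ h1.symm)
      have hvword : (t⁻¹ * w').toWord = FreeGroup.invRev t.toWord ++ w'.toWord := by
        rw [toWord_mul_of_chain (by rwa [hinv]), hinv]
      refine toWord_mul_of_chain ?_
      rw [hvword]
      refine List.isChain_append.mpr ⟨hchain1, chain_toWord t, ?_⟩
      intro x hx y hy
      rw [List.getLast?_append_of_ne_nil _ hw'Tne] at hx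
      rw [hhead] at hy
      simp only [Option.mem_def, Option.some.injEq] at hy
      subst hy
      rintro ⟨h1, -⟩
      exact hi ((hw'last x hx) ▸ h1)
    · -- evaluation
      have heval : FreeGroup.lift f (t⁻¹ * w' * t) = φ c (FreeGroup.lift f w) := by
        rw [hw'eq, hφ]
        simp [map_mul, map_inv, mul_assoc]
      rcases hcmem with rfl | rfl | rfl
      · rw [heval]; exact hwV.1
      · rw [heval]; exact hwV.2.1
      · rw [heval]; exact hwV.2.2

end Stmt11Aux

/-- For a Polish group `G`, `n ≥ 2`, a sequence `(u_k)` of (reduced) words in the free group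
`F_n`, and a tuple `f̄` generating a non-discrete subgroup, there are words `v_k` such that
each product `w_k = v_k * u_k` is reduced as a concatenation (it ends with `u_k`) and
`w_k(f̄) → e`. -/
theorem stmt11 {G : Type} [Group G] [TopologicalSpace G] [IsTopologicalGroup G] [PolishSpace G]
    (n : ℕ) (hn : 2 ≤ n) (u : ℕ → FreeGroup (Fin n)) (f : Fin n → G)
    (hf : ¬ DiscreteTopology (Subgroup.closure (Set.range f))) :
    ∃ v : ℕ → FreeGroup (Fin n),
      (∀ k, (v k * u k).toWord = (v k).toWord ++ (u k).toWord) ∧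
      Tendsto (fun k => FreeGroup.lift f (v k * u k)) atTop (nhds 1) := by
  obtain ⟨B, hB⟩ := Filter.exists_antitone_basis (𝓝 (1 : G))
  have hkey : ∀ k, ∃ v, (v * u k).toWord = v.toWord ++ (u k).toWord ∧
      FreeGroup.lift f (v * u k) ∈ B k :=
    fun k => Stmt11Aux.key hn hf (u k) (hB.1.mem_of_mem trivial)
  choose v hv1 hv2 using hkey
  exact ⟨v, hv1, hB.tendsto hv2⟩
end

section
/- Let G be a non-archimedean Polish group. Then for every g ∈ G, the cyclic subgroup ⟨g⟩ is either discrete or precompact (totally bounded) in G. -/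
open Topology

/-- In a non-archimedean Polish group (one with a neighborhood basis at the identity
consisting of open subgroups), every cyclic subgroup `⟨g⟩` is either discrete or
precompact (totally bounded in the group uniformity). -/
theorem stmt13 {G : Type} [Group G] [TopologicalSpace G] [IsTopologicalGroup G] [PolishSpace G]
    (hna : (nhds (1 : G)).HasBasis (fun U : Subgroup G => IsOpen (U : Set G))
      (fun U : Subgroup G => (U : Set G)))
    (g : G) :
    DiscreteTopology (Subgroup.zpowers g) ∨
      @TotallyBounded G (IsTopologicalGroup.rightUniformSpace G)
        (Subgroup.zpowers g : Set G) := by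
  by_cases h : ∃ U : Subgroup G, IsOpen (U : Set G) ∧ ∀ n : ℤ, g ^ n ∈ U → n = 0
  · -- discrete case
    left
    obtain ⟨U, hUopen, hU⟩ := h
    rw [discreteTopology_iff_isOpen_singleton_one]
    have : ({1} : Set (Subgroup.zpowers g)) =
        Subtype.val ⁻¹' (U : Set G) := by
      ext ⟨x, hx⟩
      obtain ⟨n, rfl⟩ := Subgroup.mem_zpowers_iff.mp hx
      simp only [Set.mem_singleton_iff, Set.mem_preimage, SetLike.mem_coe]
      constructor
      · intro h1
        have h1' : g ^ n = 1 := congrArg Subtype.val h1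
        rw [h1']
        exact U.one_mem
      · intro hmem
        have hn := hU n hmem
        apply Subtype.ext
        simp [hn]
    rw [this]
    exact hUopen.preimage continuous_subtype_val
  · -- totally bounded case
    right
    push_neg at h
    letI : UniformSpace G := IsTopologicalGroup.rightUniformSpace G
    intro d hd
    rw [uniformity_eq_comap_nhds_one'] at hd
    obtain ⟨V, hV, hVd⟩ := hd
    obtain ⟨U, hUopen, hUV⟩ := hna.mem_iff.mp hV
    obtain ⟨n, hnU, hn0⟩ := h U hUopen
    set m : ℤ := (n.natAbs : ℤ) with hm
    have hmpos : 0 < m := by positivity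
    have hmU : g ^ m ∈ U := by
      rcases Int.natAbs_eq n with he | he
      · rwa [hm, ← he]
      · rw [hm, ← neg_neg ((n.natAbs : ℤ)), ← he, zpow_neg]
        exact U.inv_mem hnU
    refine ⟨(fun r : ℕ => g ^ (r : ℤ)) '' Set.Iio n.natAbs,
      (Set.finite_Iio _).image _, ?_⟩
    intro x hx
    obtain ⟨k, rfl⟩ := Subgroup.mem_zpowers_iff.mp hx
    have hr0 : 0 ≤ k % m := Int.emod_nonneg k (by omega)
    have hrm : k % m < m := Int.emod_lt_of_pos k hmpos
    refine Set.mem_iUnion₂.mpr ⟨g ^ (k % m), ⟨(k % m).toNat, ?_, by simp [Int.toNat_of_nonneg hr0]⟩, ?_⟩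
    · simp only [Set.mem_Iio]; omega
    · apply hVd
      have : g ^ (k % m) / g ^ k = (g ^ m) ^ (-(k / m)) := by
        rw [← zpow_mul, div_eq_iff_eq_mul, ← zpow_add]
        congr 1
        have := Int.mul_ediv_add_emod k m
        ring_nf
        omega
      show g ^ (k % m) * (g ^ k)⁻¹ ∈ V
      rw [← div_eq_mul_inv, this]
      exact hUV (U.zpow_mem hmU _)
end
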